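/- Let G be a group in which there is a uniform bound k on the lengths of strictly descending chains of centralizers of subsets. If G is locally nilpotent, then G is soluble of derived length at most k. -/

import Mathlib

section Aux

variable {G : Type*} [Group G]
open scoped commutatorElement

/-- Existence of a strictly descending chain of centralizers with `k` strict steps. -/
def ChainN (G : Type*) [Group G] (k : ℕ) : Prop :=
  ∃ C : ℕ → Set G, ∀ i j : ℕ, i < j → j ≤ k →
    Subgroup.centralizer (C j) < Subgroup.centralizer (C i)

lemma mem_centralizer_image {H : Subgroup G} {S : Set H} {x : H} :
    (x : G) ∈ Subgroup.centralizer (Subtype.val '' S) ↔ x ∈ Subgroup.centralizer S := by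
  simp only [Subgroup.mem_centralizer_iff, Set.forall_mem_image]
  constructor
  · intro h c hc
    exact Subtype.ext (h hc)
  · intro h c hc
    exact congrArg Subtype.val (h c hc)

lemma cent_iUnion_mem {H : Subgroup G} {C : ℕ → Set H} {i : ℕ} {x : H}
    (hx : ∀ l ≤ i, x ∈ Subgroup.centralizer (C l)) :
    (x : G) ∈ Subgroup.centralizer (Subtype.val '' ⋃ l ≤ i, C l) := by
  rw [Subgroup.mem_centralizer_iff]
  rintro g ⟨c, hc, rfl⟩
  simp only [Set.mem_iUnion] at hc
  obtain ⟨l, hl, hcl⟩ := hc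
  exact congrArg Subtype.val (Subgroup.mem_centralizer_iff.mp (hx l hl) c hcl)

lemma not_cent_of {H : Subgroup G} {S : Set H} {x : H} (hx : x ∉ Subgroup.centralizer S)
    {T : Set G} (hT : Subtype.val '' S ⊆ T) : (x : G) ∉ Subgroup.centralizer T := fun h =>
  hx (mem_centralizer_image.mp (Subgroup.centralizer_le hT h))

/-- From a strict chain in the centralizer of `C i`, get one for the union. -/
lemma chain_all_le {H : Subgroup G} {C : ℕ → Set H} {m : ℕ}
    (hC : ∀ i j : ℕ, i < j → j ≤ m → Subgroup.centralizer (C j) < Subgroup.centralizer (C i))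
    {i : ℕ} (him : i ≤ m) {x : H} (hx : x ∈ Subgroup.centralizer (C i)) :
    ∀ l ≤ i, x ∈ Subgroup.centralizer (C l) := by
  intro l hl
  rcases eq_or_lt_of_le hl with rfl | hl'
  · exact hx
  · exact (hC l i hl' him).le hx

lemma chainN_of_subgroup (H : Subgroup G) {m : ℕ} (h : ChainN H m) : ChainN G m := by
  obtain ⟨C, hC⟩ := h
  refine ⟨fun i => Subtype.val '' ⋃ l ≤ i, C l, ?_⟩
  intro i j hij hjm
  rw [SetLike.lt_iff_le_and_exists]
  constructor
  · refine Subgroup.centralizer_le (Set.image_mono ?_)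
    exact Set.biUnion_mono (fun l hl => le_trans hl hij.le) (fun _ _ => le_rfl)
  · obtain ⟨x, hxi, hxj⟩ := SetLike.exists_of_lt (hC i j hij hjm)
    refine ⟨(x : G), cent_iUnion_mem (chain_all_le hC (hij.le.trans hjm) hxi), ?_⟩
    refine not_cent_of hxj (Set.image_mono ?_)
    intro c hc
    simp only [Set.mem_iUnion]
    exact ⟨j, le_rfl, hc⟩

lemma chainN_of_centralizer {z : G} (hz : ∃ g : G, ¬ Commute g z) {m : ℕ}
    (h : ChainN (Subgroup.centralizer ({z} : Set G)) m) : ChainN G (m + 1) := by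
  obtain ⟨g₀, hg₀⟩ := hz
  obtain ⟨C, hC⟩ := h
  refine ⟨fun n => if n = 0 then ∅ else (Subtype.val '' ⋃ l ≤ n - 1, C l) ∪ {z}, ?_⟩
  intro i j hij hjm
  have hj0 : j ≠ 0 := by omega
  rw [SetLike.lt_iff_le_and_exists]
  rcases Nat.eq_zero_or_pos i with rfl | hi0
  · simp only [if_pos rfl, if_neg hj0]
    constructor
    · exact Subgroup.centralizer_le (Set.empty_subset _)
    · refine ⟨g₀, ?_, ?_⟩
      · rw [Subgroup.mem_centralizer_iff]; rintro h hh; exact absurd hh (Set.notMem_empty h)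
      · intro hmem
        have := Subgroup.mem_centralizer_iff.mp hmem z (Or.inr rfl)
        exact hg₀ this.symm
  · have hi0' : i ≠ 0 := by omega
    simp only [if_neg hi0', if_neg hj0]
    have hij' : i - 1 < j - 1 := by omega
    have hjm' : j - 1 ≤ m := by omega
    constructor
    · refine Subgroup.centralizer_le (Set.union_subset_union_left _ (Set.image_mono ?_))
      refine Set.biUnion_mono (fun l hl => le_trans hl (by omega : i - 1 ≤ j - 1))
        (fun _ _ => le_rfl)
    · obtain ⟨x, hxi, hxj⟩ := SetLike.exists_of_lt (hC (i - 1) (j - 1) hij' hjm')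
      refine ⟨(x : G), ?_, ?_⟩
      · rw [Subgroup.mem_centralizer_iff]
        rintro h (hh | hh)
        · exact Subgroup.mem_centralizer_iff.mp
            (cent_iUnion_mem (chain_all_le hC (hij'.le.trans hjm') hxi)) h hh
        · rw [Set.mem_singleton_iff] at hh
          subst hh
          exact Subgroup.mem_centralizer_iff.mp x.2 h rfl
      · intro hmem
        refine not_cent_of hxj (T := (Subtype.val '' ⋃ l ≤ j - 1, C l) ∪ {z}) ?_ hmem
        refine le_trans (Set.image_mono ?_) Set.subset_union_left
        intro c hc
        simp only [Set.mem_iUnion]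
        exact ⟨j - 1, le_rfl, hc⟩

lemma ucs_stab {n : ℕ}
    (h : Subgroup.upperCentralSeries G (n + 1) = Subgroup.upperCentralSeries G n) :
    ∀ m, n ≤ m → Subgroup.upperCentralSeries G m = Subgroup.upperCentralSeries G n := by
  intro m hm
  induction m with
  | zero =>
    have hn0 : n = 0 := by omega
    subst hn0; rfl
  | succ m ih =>
    rcases Nat.lt_or_ge n (m + 1) with h1 | h2
    · have e := ih (by omega)
      calc Subgroup.upperCentralSeries G (m + 1) = Subgroup.upperCentralSeries G (n + 1) := by
            ext x
            rw [mem_upperCentralSeries_succ_iff, mem_upperCentralSeries_succ_iff, e]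
        _ = Subgroup.upperCentralSeries G n := h
    · have : n = m + 1 := by omega
      rw [this]

lemma central_conj {a : G} (ha : ∀ x : G, a * x = x * a) (w : G) : a * w * a⁻¹ = w := by
  rw [ha w]; group

lemma comm_central_left {a g x : G} (ha : ∀ y : G, a * y = y * a) : ⁅a * g, x⁆ = ⁅g, x⁆ := by
  have h := central_conj ha (g * x * g⁻¹)
  calc ⁅a * g, x⁆ = a * (g * x * g⁻¹) * a⁻¹ * x⁻¹ := by
        rw [commutatorElement_def]; group
    _ = (g * x * g⁻¹) * x⁻¹ := by rw [h]
    _ = ⁅g, x⁆ := by rw [commutatorElement_def]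

lemma comm_central_right {b h x : G} (hb : ∀ y : G, b * y = y * b) : ⁅x, b * h⁆ = ⁅x, h⁆ := by
  have := comm_central_left (g := h) (x := x) hb
  calc ⁅x, b * h⁆ = ⁅b * h, x⁆⁻¹ := by rw [commutatorElement_inv]
    _ = ⁅h, x⁆⁻¹ := by rw [this]
    _ = ⁅x, h⁆ := by rw [commutatorElement_inv]

/-- If `z` is in the second term of the upper central series, every commutator
centralizes `z`. -/
lemma commutator_mem_centralizer_of_ucs2 {z : G} (hz : z ∈ Subgroup.upperCentralSeries G 2)
    (g h : G) : Commute ⁅g, h⁆ z := by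
  have hzy : ∀ y : G, z * y * z⁻¹ * y⁻¹ ∈ Subgroup.center G := by
    intro y
    have := mem_upperCentralSeries_succ_iff.mp hz y
    rwa [upperCentralSeries_one] at this
  have hconj : ∀ y : G, z * y * z⁻¹ = (z * y * z⁻¹ * y⁻¹) * y := by intro y; group
  have key : z * ⁅g, h⁆ * z⁻¹ = ⁅g, h⁆ := by
    have e1 : z * ⁅g, h⁆ * z⁻¹ = ⁅z * g * z⁻¹, z * h * z⁻¹⁆ := by
      have := map_commutatorElement (MulAut.conj z).toMonoidHom g h
      exact this
    rw [e1, hconj g, hconj h,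
      comm_central_left (fun y => (Subgroup.mem_center_iff.mp (hzy g) y).symm),
      comm_central_right (fun y => (Subgroup.mem_center_iff.mp (hzy h) y).symm)]
  have : Commute z ⁅g, h⁆ := by
    have := key
    rw [mul_inv_eq_iff_eq_mul] at this
    exact this
  exact this.symm

lemma ds_mono_subgroup {H K : Subgroup G} (hHK : H ≤ K) (n : ℕ) :
    Subgroup.map H.subtype (derivedSeries H n) ≤ Subgroup.map K.subtype (derivedSeries K n) := by
  induction n with
  | zero =>
    rw [derivedSeries_zero, derivedSeries_zero, ← MonoidHom.range_eq_map,
      ← MonoidHom.range_eq_map, Subgroup.range_subtype, Subgroup.range_subtype]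
    exact hHK
  | succ n ih =>
    rw [derivedSeries_succ, derivedSeries_succ, Subgroup.map_commutator, Subgroup.map_commutator]
    exact Subgroup.commutator_mono ih ih

lemma mem_ds_local {x : G} {n : ℕ} (hx : x ∈ derivedSeries G n) :
    ∃ S : Finset G, x ∈ Subgroup.map (Subgroup.closure (S : Set G)).subtype
      (derivedSeries (Subgroup.closure (S : Set G)) n) := by
  classical
  induction n generalizing x with
  | zero =>
    refine ⟨{x}, ⟨⟨x, Subgroup.subset_closure (by simp)⟩, Subgroup.mem_top _, rfl⟩⟩
  | succ n ih =>
    rw [derivedSeries_succ, Subgroup.commutator_def] at hx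
    refine Subgroup.closure_induction ?_ ?_ ?_ ?_ hx
    · rintro w ⟨a, ha, b, hb, rfl⟩
      obtain ⟨S, hS⟩ := ih ha
      obtain ⟨T, hT⟩ := ih hb
      refine ⟨S ∪ T, ?_⟩
      have hSU : Subgroup.closure ((S : Set G)) ≤ Subgroup.closure ((↑(S ∪ T) : Set G)) :=
        Subgroup.closure_mono (by intro a ha; simp at ha ⊢; exact Or.inl ha)
      have hTU : Subgroup.closure ((T : Set G)) ≤ Subgroup.closure ((↑(S ∪ T) : Set G)) :=
        Subgroup.closure_mono (by intro a ha; simp at ha ⊢; exact Or.inr ha)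
      have h1 := ds_mono_subgroup hSU n hS
      have h2 := ds_mono_subgroup hTU n hT
      obtain ⟨a', ha', rfl⟩ := h1
      obtain ⟨b', hb', rfl⟩ := h2
      refine ⟨⁅a', b'⁆, ?_, ?_⟩
      · rw [derivedSeries_succ]
        exact Subgroup.commutator_mem_commutator ha' hb'
      · exact map_commutatorElement (Subgroup.closure (↑(S ∪ T) : Set G)).subtype a' b'
    · exact ⟨∅, Subgroup.one_mem _⟩
    · rintro a b _ _ ⟨S, hS⟩ ⟨T, hT⟩
      refine ⟨S ∪ T, ?_⟩
      have hSU : Subgroup.closure ((S : Set G)) ≤ Subgroup.closure ((↑(S ∪ T) : Set G)) :=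
        Subgroup.closure_mono (by intro a ha; simp at ha ⊢; exact Or.inl ha)
      have hTU : Subgroup.closure ((T : Set G)) ≤ Subgroup.closure ((↑(S ∪ T) : Set G)) :=
        Subgroup.closure_mono (by intro a ha; simp at ha ⊢; exact Or.inr ha)
      exact Subgroup.mul_mem _ (ds_mono_subgroup hSU (n + 1) hS) (ds_mono_subgroup hTU (n + 1) hT)
    · rintro a _ ⟨S, hS⟩
      exact ⟨S, Subgroup.inv_mem _ hS⟩

lemma derivedSeries_le_one (n : ℕ) : derivedSeries G (n + 1) ≤ derivedSeries G 1 := by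
  induction n with
  | zero => exact le_rfl
  | succ n ih =>
    rw [derivedSeries_succ]
    calc ⁅derivedSeries G (n + 1), derivedSeries G (n + 1)⁆
        ≤ ⁅(⊤ : Subgroup G), (⊤ : Subgroup G)⁆ := Subgroup.commutator_mono le_top le_top
      _ = derivedSeries G 1 := by rw [derivedSeries_succ, derivedSeries_zero]

theorem nilp_sol : ∀ (k : ℕ) (G : Type*) [Group G], Group.IsNilpotent G → ¬ ChainN G k →
    derivedSeries G k = ⊥ := by
  intro k
  induction k with
  | zero =>
    intro G _ _ hc
    exact absurd ⟨fun _ => (∅ : Set G), fun i j hij hj0 => absurd hj0 (by omega)⟩ hc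
  | succ k ih =>
    intro G _ hnil hc
    haveI := hnil
    by_cases hab : ∀ g h : G, Commute g h
    · have h1 : derivedSeries G 1 ≤ ⊥ := by
        rw [derivedSeries_succ, derivedSeries_zero]
        refine Subgroup.commutator_le.mpr fun g _ h _ => ?_
        rw [Subgroup.mem_bot]
        exact commutatorElement_eq_one_iff_commute.mpr (hab g h)
      exact le_antisymm ((derivedSeries_le_one k).trans h1) bot_le
    · push_neg at hab
      obtain ⟨g, h, hgh⟩ := hab
      have h21 : Subgroup.upperCentralSeries G 1 < Subgroup.upperCentralSeries G 2 := by
        rcases lt_or_eq_of_le (upperCentralSeries_mono G (by omega : 1 ≤ 2)) with h' | h'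
        · exact h'
        · exfalso
          have hstab := ucs_stab (G := G) h'.symm
          have htop : Subgroup.upperCentralSeries G (max (Group.nilpotencyClass G) 1) = ⊤ := by
            refine le_antisymm le_top ?_
            rw [← upperCentralSeries_nilpotencyClass]
            exact upperCentralSeries_mono G (le_max_left _ _)
          have : Subgroup.upperCentralSeries G 1 = ⊤ := by
            rw [← hstab _ (le_max_right _ _), htop]
          rw [upperCentralSeries_one] at this
          have hh : h ∈ Subgroup.center G := by rw [this]; exact Subgroup.mem_top h
          exact hgh (Subgroup.mem_center_iff.mp hh g)
      obtain ⟨z, hz2, hz1⟩ := SetLike.exists_of_lt h21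
      rw [upperCentralSeries_one] at hz1
      have hznc : ∃ g' : G, ¬ Commute g' z := by
        by_contra hcon
        push_neg at hcon
        exact hz1 (Subgroup.mem_center_iff.mpr fun g' => hcon g')
      set H := Subgroup.centralizer ({z} : Set G) with hHdef
      have hHc : ¬ ChainN H k := fun hc' => hc (chainN_of_centralizer hznc hc')
      have hds : derivedSeries H k = ⊥ := ih H inferInstance hHc
      have hG' : derivedSeries G 1 ≤ H := by
        rw [derivedSeries_succ, derivedSeries_zero]
        refine Subgroup.commutator_le.mpr fun a _ b _ => ?_
        rw [hHdef, Subgroup.mem_centralizer_iff]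
        rintro s rfl
        exact ((commutator_mem_centralizer_of_ucs2 hz2 a b).symm)
      have claim : ∀ n, derivedSeries G (n + 1) ≤ Subgroup.map H.subtype (derivedSeries H n) := by
        intro n
        induction n with
        | zero =>
          rw [derivedSeries_zero, ← MonoidHom.range_eq_map, Subgroup.range_subtype]
          exact hG'
        | succ n ihn =>
          exact Subgroup.commutator_le_map_commutator ihn ihn
      have := (claim k).trans (le_of_eq (by rw [hds, Subgroup.map_bot]))
      exact le_antisymm this bot_le

end Aux

/-- If there is a uniform bound `k` on the lengths of strictly descending chains of
centralizers of subsets of `G`, and `G` is locally nilpotent, then `G` is soluble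
of derived length at most `k`. -/
theorem stmt_5 {G : Type*} [Group G] (k : ℕ)
    (hk : ¬ ∃ C : Fin (k + 1) → Set G,
      ∀ i j : Fin (k + 1), i < j → Subgroup.centralizer (C j) < Subgroup.centralizer (C i))
    (hln : ∀ S : Finset G, Group.IsNilpotent (Subgroup.closure (S : Set G))) :
    derivedSeries G k = ⊥ := by
  have hkN : ¬ ChainN G k := by
    rintro ⟨C, hC⟩
    refine hk ⟨fun i => C i.val, fun i j hij => hC i.val j.val hij (Nat.le_of_lt_succ j.isLt)⟩
  rw [eq_bot_iff]
  intro x hx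
  obtain ⟨S, hS⟩ := mem_ds_local hx
  have hKc : ¬ ChainN (Subgroup.closure (S : Set G)) k :=
    fun hc => hkN (chainN_of_subgroup _ hc)
  have hbot := nilp_sol k (Subgroup.closure (S : Set G)) (hln S) hKc
  rw [hbot, Subgroup.map_bot] at hS
  exact hS
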